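/- The number of dominant monomial ideals in K[x,y,z] whose minimal generators have lcm x^{m_1} y^{m_2} z^{m_3} (with m_1,m_2,m_3 ≥ 1) is 1 + m_1^2 m_2^2 m_3^2 + m_1 m_2 + m_1 m_3 + m_2 m_3 + 3 m_1 m_2 m_3. -/

import Mathlib

def DominantSet {n : ℕ} (L : Finset (Fin n → ℕ)) : Prop :=
  ∀ v ∈ L, ∃ i : Fin n, ∀ w ∈ L, w ≠ v → w i < v i

def mLcm {n : ℕ} (L : Finset (Fin n → ℕ)) : Fin n → ℕ :=
  fun i => L.sup fun g => g i

namespace CountDom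

lemma fpair_eq {α : Type*} [DecidableEq α] {a b c d : α} (h : ({a,b} : Finset α) = {c,d}) :
    (a = c ∧ b = d) ∨ (a = d ∧ b = c) := by
  have h2 : ({a,b} : Set α) = {c,d} := by
    have := congrArg (fun s : Finset α => (s : Set α)) h
    simpa using this
  exact Set.pair_eq_pair_iff.mp h2

lemma vec3_ext (v : Fin 3 → ℕ) : v = ![v 0, v 1, v 2] := by
  funext i; fin_cases i <;> rfl

lemma vec3_eq_iff {a b c d e f : ℕ} : ![a,b,c] = ![d,e,f] ↔ a = d ∧ b = e ∧ c = f := by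
  constructor
  · intro h; exact ⟨congrFun h 0, congrFun h 1, congrFun h 2⟩
  · rintro ⟨rfl, rfl, rfl⟩; rfl

lemma mLcm_pair (p q : Fin 3 → ℕ) (i : Fin 3) : mLcm {p, q} i = max (p i) (q i) := by
  simp [mLcm]

lemma mLcm_triple (p q r : Fin 3 → ℕ) (i : Fin 3) :
    mLcm {p, q, r} i = max (p i) (max (q i) (r i)) := by
  simp [mLcm]

section Pieces
variable (m₁ m₂ m₃ : ℕ)

def Good (L : Finset (Fin 3 → ℕ)) : Prop :=
  (∀ u ∈ L, ∀ v ∈ L, u ≤ v → u = v) ∧ DominantSet L ∧ mLcm L = ![m₁, m₂, m₃]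

lemma single_good : Good m₁ m₂ m₃ {![m₁, m₂, m₃]} := by
  refine ⟨?_, ?_, ?_⟩
  · intro u hu v hv _; simp at hu hv; subst hu; subst hv; rfl
  · intro v hv; exact ⟨0, fun w hw hne => by simp at hv hw; subst hv; subst hw; exact absurd rfl hne⟩
  · funext i; simp [mLcm]

lemma pair_good (p q : Fin 3 → ℕ) (i j : Fin 3)
    (h1 : q i < p i) (h2 : p j < q j)
    (hsup : ∀ t, max (p t) (q t) = ![m₁, m₂, m₃] t) :
    Good m₁ m₂ m₃ {p, q} := by
  have hpq : p ≠ q := fun h => by rw [h] at h1; omega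
  refine ⟨?_, ?_, ?_⟩
  · intro u hu v hv huv
    rw [Pi.le_def] at huv
    simp only [Finset.mem_insert, Finset.mem_singleton] at hu hv
    rcases hu with rfl | rfl <;> rcases hv with rfl | rfl
    · rfl
    · exact absurd (huv i) (by omega)
    · exact absurd (huv j) (by omega)
    · rfl
  · intro v hv
    simp only [Finset.mem_insert, Finset.mem_singleton] at hv
    rcases hv with rfl | rfl
    · exact ⟨i, fun w hw hne => by
        simp only [Finset.mem_insert, Finset.mem_singleton] at hw
        rcases hw with rfl | rfl
        · exact absurd rfl hne
        · exact h1⟩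
    · exact ⟨j, fun w hw hne => by
        simp only [Finset.mem_insert, Finset.mem_singleton] at hw
        rcases hw with rfl | rfl
        · exact h2
        · exact absurd rfl hne⟩
  · funext t; rw [mLcm_pair]; exact hsup t

lemma triple_good (p q r : Fin 3 → ℕ)
    (h1 : q 0 < p 0) (h2 : r 0 < p 0) (h3 : p 1 < q 1) (h4 : r 1 < q 1)
    (h5 : p 2 < r 2) (h6 : q 2 < r 2)
    (hsup : ∀ t, max (p t) (max (q t) (r t)) = ![m₁, m₂, m₃] t) :
    Good m₁ m₂ m₃ {p, q, r} := by
  refine ⟨?_, ?_, ?_⟩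
  · intro u hu v hv huv
    rw [Pi.le_def] at huv
    simp only [Finset.mem_insert, Finset.mem_singleton] at hu hv
    rcases hu with rfl | rfl | rfl <;> rcases hv with rfl | rfl | rfl <;>
      first
        | rfl
        | exact absurd (huv 0) (by omega)
        | exact absurd (huv 1) (by omega)
        | exact absurd (huv 2) (by omega)
  · intro v hv
    simp only [Finset.mem_insert, Finset.mem_singleton] at hv
    rcases hv with rfl | rfl | rfl
    · exact ⟨0, fun w hw hne => by
        simp only [Finset.mem_insert, Finset.mem_singleton] at hw
        rcases hw with rfl | rfl | rfl
        · exact absurd rfl hne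
        · exact h1
        · exact h2⟩
    · exact ⟨1, fun w hw hne => by
        simp only [Finset.mem_insert, Finset.mem_singleton] at hw
        rcases hw with rfl | rfl | rfl
        · exact h3
        · exact absurd rfl hne
        · exact h4⟩
    · exact ⟨2, fun w hw hne => by
        simp only [Finset.mem_insert, Finset.mem_singleton] at hw
        rcases hw with rfl | rfl | rfl
        · exact h5
        · exact h6
        · exact absurd rfl hne⟩
  · funext t; rw [mLcm_triple]; exact hsup t


def T0 : Finset (Finset (Fin 3 → ℕ)) := {{![m₁, m₂, m₃]}}
def T1 : Finset (Finset (Fin 3 → ℕ)) :=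
  (Finset.range m₁ ×ˢ Finset.range m₂).image
    (fun p => {![m₁, p.2, m₃], ![p.1, m₂, m₃]})
def T2 : Finset (Finset (Fin 3 → ℕ)) :=
  (Finset.range m₁ ×ˢ Finset.range m₃).image
    (fun p => {![m₁, m₂, p.2], ![p.1, m₂, m₃]})
def T3 : Finset (Finset (Fin 3 → ℕ)) :=
  (Finset.range m₂ ×ˢ Finset.range m₃).image
    (fun p => {![m₁, m₂, p.2], ![m₁, p.1, m₃]})
def T4 : Finset (Finset (Fin 3 → ℕ)) :=
  (Finset.range m₁ ×ˢ Finset.range m₂ ×ˢ Finset.range m₃).image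
    (fun p => {![m₁, p.2.1, p.2.2], ![p.1, m₂, m₃]})
def T5 : Finset (Finset (Fin 3 → ℕ)) :=
  (Finset.range m₁ ×ˢ Finset.range m₂ ×ˢ Finset.range m₃).image
    (fun p => {![p.1, m₂, p.2.2], ![m₁, p.2.1, m₃]})
def T6 : Finset (Finset (Fin 3 → ℕ)) :=
  (Finset.range m₁ ×ˢ Finset.range m₂ ×ˢ Finset.range m₃).image
    (fun p => {![p.1, p.2.1, m₃], ![m₁, m₂, p.2.2]})
def T7 : Finset (Finset (Fin 3 → ℕ)) :=
  ((Finset.range m₁ ×ˢ Finset.range m₂ ×ˢ Finset.range m₃) ×ˢ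
   (Finset.range m₁ ×ˢ Finset.range m₂ ×ˢ Finset.range m₃)).image
    (fun p => {![m₁, p.1.2.1, p.1.2.2], ![p.1.1, m₂, p.2.2.2], ![p.2.1, p.2.2.1, m₃]})

def T : Finset (Finset (Fin 3 → ℕ)) :=
  T0 m₁ m₂ m₃ ∪ T1 m₁ m₂ m₃ ∪ T2 m₁ m₂ m₃ ∪ T3 m₁ m₂ m₃ ∪ T4 m₁ m₂ m₃ ∪
    T5 m₁ m₂ m₃ ∪ T6 m₁ m₂ m₃ ∪ T7 m₁ m₂ m₃

set_option linter.unusedSectionVars false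

lemma good_T : ∀ L ∈ T m₁ m₂ m₃, Good m₁ m₂ m₃ L := by
  intro L hL
  simp only [T, Finset.mem_union] at hL
  rcases hL with ((((((hL | hL) | hL) | hL) | hL) | hL) | hL) | hL
  · simp only [T0, Finset.mem_singleton] at hL
    subst hL; exact single_good m₁ m₂ m₃
  · simp only [T1, Finset.mem_image, Finset.mem_product, Finset.mem_range] at hL
    obtain ⟨p, ⟨ha, hb⟩, rfl⟩ := hL
    exact pair_good _ _ _ _ _ 0 1 (by simp; omega) (by simp; omega)
      (by intro t; fin_cases t <;> simp <;> omega)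
  · simp only [T2, Finset.mem_image, Finset.mem_product, Finset.mem_range] at hL
    obtain ⟨p, ⟨ha, hb⟩, rfl⟩ := hL
    exact pair_good _ _ _ _ _ 0 2 (by simp; omega) (by simp; omega)
      (by intro t; fin_cases t <;> simp <;> omega)
  · simp only [T3, Finset.mem_image, Finset.mem_product, Finset.mem_range] at hL
    obtain ⟨p, ⟨ha, hb⟩, rfl⟩ := hL
    exact pair_good _ _ _ _ _ 1 2 (by simp; omega) (by simp; omega)
      (by intro t; fin_cases t <;> simp <;> omega)
  · simp only [T4, Finset.mem_image, Finset.mem_product, Finset.mem_range] at hL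
    obtain ⟨p, ⟨ha, hb, hc⟩, rfl⟩ := hL
    exact pair_good _ _ _ _ _ 0 1 (by simp; omega) (by simp; omega)
      (by intro t; fin_cases t <;> simp <;> omega)
  · simp only [T5, Finset.mem_image, Finset.mem_product, Finset.mem_range] at hL
    obtain ⟨p, ⟨ha, hb, hc⟩, rfl⟩ := hL
    exact pair_good _ _ _ _ _ 1 0 (by simp; omega) (by simp; omega)
      (by intro t; fin_cases t <;> simp <;> omega)
  · simp only [T6, Finset.mem_image, Finset.mem_product, Finset.mem_range] at hL
    obtain ⟨p, ⟨ha, hb, hc⟩, rfl⟩ := hL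
    exact pair_good _ _ _ _ _ 2 0 (by simp; omega) (by simp; omega)
      (by intro t; fin_cases t <;> simp <;> omega)
  · simp only [T7, Finset.mem_image, Finset.mem_product, Finset.mem_range] at hL
    obtain ⟨p, ⟨⟨ha, hb, hc⟩, ⟨hd, he, hf⟩⟩, rfl⟩ := hL
    exact triple_good _ _ _ _ _ _ (by simp; omega) (by simp; omega) (by simp; omega)
      (by simp; omega) (by simp; omega) (by simp; omega)
      (by intro t; fin_cases t <;> simp <;> omega)


lemma card_T0 : (T0 m₁ m₂ m₃).card = 1 := rfl

lemma card_T1 : (T1 m₁ m₂ m₃).card = m₁ * m₂ := by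
  rw [T1, Finset.card_image_of_injOn, Finset.card_product, Finset.card_range, Finset.card_range]
  intro p hp q hq h
  simp only [Finset.coe_product, Set.mem_prod, Finset.mem_coe, Finset.mem_range] at hp hq
  rcases fpair_eq h with ⟨e1, e2⟩ | ⟨e1, e2⟩ <;> rw [vec3_eq_iff] at e1 e2 <;>
    simp only [Prod.ext_iff] <;> omega

lemma card_T2 : (T2 m₁ m₂ m₃).card = m₁ * m₃ := by
  rw [T2, Finset.card_image_of_injOn, Finset.card_product, Finset.card_range, Finset.card_range]
  intro p hp q hq h
  simp only [Finset.coe_product, Set.mem_prod, Finset.mem_coe, Finset.mem_range] at hp hq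
  rcases fpair_eq h with ⟨e1, e2⟩ | ⟨e1, e2⟩ <;> rw [vec3_eq_iff] at e1 e2 <;>
    simp only [Prod.ext_iff] <;> omega

lemma card_T3 : (T3 m₁ m₂ m₃).card = m₂ * m₃ := by
  rw [T3, Finset.card_image_of_injOn, Finset.card_product, Finset.card_range, Finset.card_range]
  intro p hp q hq h
  simp only [Finset.coe_product, Set.mem_prod, Finset.mem_coe, Finset.mem_range] at hp hq
  rcases fpair_eq h with ⟨e1, e2⟩ | ⟨e1, e2⟩ <;> rw [vec3_eq_iff] at e1 e2 <;>
    simp only [Prod.ext_iff] <;> omega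

lemma card_T4 : (T4 m₁ m₂ m₃).card = m₁ * (m₂ * m₃) := by
  rw [T4, Finset.card_image_of_injOn, Finset.card_product, Finset.card_product,
    Finset.card_range, Finset.card_range, Finset.card_range]
  intro p hp q hq h
  simp only [Finset.coe_product, Set.mem_prod, Finset.mem_coe, Finset.mem_range] at hp hq
  rcases fpair_eq h with ⟨e1, e2⟩ | ⟨e1, e2⟩ <;> rw [vec3_eq_iff] at e1 e2 <;>
    simp only [Prod.ext_iff] <;> omega

lemma card_T5 : (T5 m₁ m₂ m₃).card = m₁ * (m₂ * m₃) := by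
  rw [T5, Finset.card_image_of_injOn, Finset.card_product, Finset.card_product,
    Finset.card_range, Finset.card_range, Finset.card_range]
  intro p hp q hq h
  simp only [Finset.coe_product, Set.mem_prod, Finset.mem_coe, Finset.mem_range] at hp hq
  rcases fpair_eq h with ⟨e1, e2⟩ | ⟨e1, e2⟩ <;> rw [vec3_eq_iff] at e1 e2 <;>
    simp only [Prod.ext_iff] <;> omega

lemma card_T6 : (T6 m₁ m₂ m₃).card = m₁ * (m₂ * m₃) := by
  rw [T6, Finset.card_image_of_injOn, Finset.card_product, Finset.card_product,
    Finset.card_range, Finset.card_range, Finset.card_range]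
  intro p hp q hq h
  simp only [Finset.coe_product, Set.mem_prod, Finset.mem_coe, Finset.mem_range] at hp hq
  rcases fpair_eq h with ⟨e1, e2⟩ | ⟨e1, e2⟩ <;> rw [vec3_eq_iff] at e1 e2 <;>
    simp only [Prod.ext_iff] <;> omega

lemma card_T7 : (T7 m₁ m₂ m₃).card = (m₁ * (m₂ * m₃)) * (m₁ * (m₂ * m₃)) := by
  rw [T7, Finset.card_image_of_injOn, Finset.card_product, Finset.card_product,
    Finset.card_product, Finset.card_range, Finset.card_range, Finset.card_range]
  intro p hp q hq h
  simp only [Finset.coe_product, Set.mem_prod, Finset.mem_coe, Finset.mem_range] at hp hq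
  simp only [Finset.ext_iff, Finset.mem_insert, Finset.mem_singleton] at h
  have hu := (h ![m₁, p.1.2.1, p.1.2.2]).mp (Or.inl rfl)
  have hv := (h ![p.1.1, m₂, p.2.2.2]).mp (Or.inr (Or.inl rfl))
  have hw := (h ![p.2.1, p.2.2.1, m₃]).mp (Or.inr (Or.inr rfl))
  rcases hu with e | e | e <;> rcases hv with f | f | f <;> rcases hw with g | g | g <;>
    rw [vec3_eq_iff] at e f g <;> simp only [Prod.ext_iff] <;> omega

lemma card_mem_T0 {L} (h : L ∈ T0 m₁ m₂ m₃) : L.card = 1 := by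
  simp only [T0, Finset.mem_singleton] at h; subst h; rfl

lemma disj_T1_T2 : Disjoint (T1 m₁ m₂ m₃) (T2 m₁ m₂ m₃) := by
  rw [Finset.disjoint_left]
  rintro L hi hj
  simp only [T1, T2, Finset.mem_image, Finset.mem_product, Finset.mem_range] at hi hj
  obtain ⟨p, hp, rfl⟩ := hi
  obtain ⟨q, hq, h⟩ := hj
  rcases fpair_eq h with ⟨e1, e2⟩ | ⟨e1, e2⟩ <;> rw [vec3_eq_iff] at e1 e2 <;> omega

lemma disj_T1_T3 : Disjoint (T1 m₁ m₂ m₃) (T3 m₁ m₂ m₃) := by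
  rw [Finset.disjoint_left]
  rintro L hi hj
  simp only [T1, T3, Finset.mem_image, Finset.mem_product, Finset.mem_range] at hi hj
  obtain ⟨p, hp, rfl⟩ := hi
  obtain ⟨q, hq, h⟩ := hj
  rcases fpair_eq h with ⟨e1, e2⟩ | ⟨e1, e2⟩ <;> rw [vec3_eq_iff] at e1 e2 <;> omega

lemma disj_T1_T4 : Disjoint (T1 m₁ m₂ m₃) (T4 m₁ m₂ m₃) := by
  rw [Finset.disjoint_left]
  rintro L hi hj
  simp only [T1, T4, Finset.mem_image, Finset.mem_product, Finset.mem_range] at hi hj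
  obtain ⟨p, hp, rfl⟩ := hi
  obtain ⟨q, hq, h⟩ := hj
  rcases fpair_eq h with ⟨e1, e2⟩ | ⟨e1, e2⟩ <;> rw [vec3_eq_iff] at e1 e2 <;> omega

lemma disj_T1_T5 : Disjoint (T1 m₁ m₂ m₃) (T5 m₁ m₂ m₃) := by
  rw [Finset.disjoint_left]
  rintro L hi hj
  simp only [T1, T5, Finset.mem_image, Finset.mem_product, Finset.mem_range] at hi hj
  obtain ⟨p, hp, rfl⟩ := hi
  obtain ⟨q, hq, h⟩ := hj
  rcases fpair_eq h with ⟨e1, e2⟩ | ⟨e1, e2⟩ <;> rw [vec3_eq_iff] at e1 e2 <;> omega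

lemma disj_T1_T6 : Disjoint (T1 m₁ m₂ m₃) (T6 m₁ m₂ m₃) := by
  rw [Finset.disjoint_left]
  rintro L hi hj
  simp only [T1, T6, Finset.mem_image, Finset.mem_product, Finset.mem_range] at hi hj
  obtain ⟨p, hp, rfl⟩ := hi
  obtain ⟨q, hq, h⟩ := hj
  rcases fpair_eq h with ⟨e1, e2⟩ | ⟨e1, e2⟩ <;> rw [vec3_eq_iff] at e1 e2 <;> omega

lemma disj_T2_T3 : Disjoint (T2 m₁ m₂ m₃) (T3 m₁ m₂ m₃) := by
  rw [Finset.disjoint_left]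
  rintro L hi hj
  simp only [T2, T3, Finset.mem_image, Finset.mem_product, Finset.mem_range] at hi hj
  obtain ⟨p, hp, rfl⟩ := hi
  obtain ⟨q, hq, h⟩ := hj
  rcases fpair_eq h with ⟨e1, e2⟩ | ⟨e1, e2⟩ <;> rw [vec3_eq_iff] at e1 e2 <;> omega

lemma disj_T2_T4 : Disjoint (T2 m₁ m₂ m₃) (T4 m₁ m₂ m₃) := by
  rw [Finset.disjoint_left]
  rintro L hi hj
  simp only [T2, T4, Finset.mem_image, Finset.mem_product, Finset.mem_range] at hi hj
  obtain ⟨p, hp, rfl⟩ := hi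
  obtain ⟨q, hq, h⟩ := hj
  rcases fpair_eq h with ⟨e1, e2⟩ | ⟨e1, e2⟩ <;> rw [vec3_eq_iff] at e1 e2 <;> omega

lemma disj_T2_T5 : Disjoint (T2 m₁ m₂ m₃) (T5 m₁ m₂ m₃) := by
  rw [Finset.disjoint_left]
  rintro L hi hj
  simp only [T2, T5, Finset.mem_image, Finset.mem_product, Finset.mem_range] at hi hj
  obtain ⟨p, hp, rfl⟩ := hi
  obtain ⟨q, hq, h⟩ := hj
  rcases fpair_eq h with ⟨e1, e2⟩ | ⟨e1, e2⟩ <;> rw [vec3_eq_iff] at e1 e2 <;> omega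

lemma disj_T2_T6 : Disjoint (T2 m₁ m₂ m₃) (T6 m₁ m₂ m₃) := by
  rw [Finset.disjoint_left]
  rintro L hi hj
  simp only [T2, T6, Finset.mem_image, Finset.mem_product, Finset.mem_range] at hi hj
  obtain ⟨p, hp, rfl⟩ := hi
  obtain ⟨q, hq, h⟩ := hj
  rcases fpair_eq h with ⟨e1, e2⟩ | ⟨e1, e2⟩ <;> rw [vec3_eq_iff] at e1 e2 <;> omega

lemma disj_T3_T4 : Disjoint (T3 m₁ m₂ m₃) (T4 m₁ m₂ m₃) := by
  rw [Finset.disjoint_left]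
  rintro L hi hj
  simp only [T3, T4, Finset.mem_image, Finset.mem_product, Finset.mem_range] at hi hj
  obtain ⟨p, hp, rfl⟩ := hi
  obtain ⟨q, hq, h⟩ := hj
  rcases fpair_eq h with ⟨e1, e2⟩ | ⟨e1, e2⟩ <;> rw [vec3_eq_iff] at e1 e2 <;> omega

lemma disj_T3_T5 : Disjoint (T3 m₁ m₂ m₃) (T5 m₁ m₂ m₃) := by
  rw [Finset.disjoint_left]
  rintro L hi hj
  simp only [T3, T5, Finset.mem_image, Finset.mem_product, Finset.mem_range] at hi hj
  obtain ⟨p, hp, rfl⟩ := hi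
  obtain ⟨q, hq, h⟩ := hj
  rcases fpair_eq h with ⟨e1, e2⟩ | ⟨e1, e2⟩ <;> rw [vec3_eq_iff] at e1 e2 <;> omega

lemma disj_T3_T6 : Disjoint (T3 m₁ m₂ m₃) (T6 m₁ m₂ m₃) := by
  rw [Finset.disjoint_left]
  rintro L hi hj
  simp only [T3, T6, Finset.mem_image, Finset.mem_product, Finset.mem_range] at hi hj
  obtain ⟨p, hp, rfl⟩ := hi
  obtain ⟨q, hq, h⟩ := hj
  rcases fpair_eq h with ⟨e1, e2⟩ | ⟨e1, e2⟩ <;> rw [vec3_eq_iff] at e1 e2 <;> omega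

lemma disj_T4_T5 : Disjoint (T4 m₁ m₂ m₃) (T5 m₁ m₂ m₃) := by
  rw [Finset.disjoint_left]
  rintro L hi hj
  simp only [T4, T5, Finset.mem_image, Finset.mem_product, Finset.mem_range] at hi hj
  obtain ⟨p, hp, rfl⟩ := hi
  obtain ⟨q, hq, h⟩ := hj
  rcases fpair_eq h with ⟨e1, e2⟩ | ⟨e1, e2⟩ <;> rw [vec3_eq_iff] at e1 e2 <;> omega

lemma disj_T4_T6 : Disjoint (T4 m₁ m₂ m₃) (T6 m₁ m₂ m₃) := by
  rw [Finset.disjoint_left]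
  rintro L hi hj
  simp only [T4, T6, Finset.mem_image, Finset.mem_product, Finset.mem_range] at hi hj
  obtain ⟨p, hp, rfl⟩ := hi
  obtain ⟨q, hq, h⟩ := hj
  rcases fpair_eq h with ⟨e1, e2⟩ | ⟨e1, e2⟩ <;> rw [vec3_eq_iff] at e1 e2 <;> omega

lemma disj_T5_T6 : Disjoint (T5 m₁ m₂ m₃) (T6 m₁ m₂ m₃) := by
  rw [Finset.disjoint_left]
  rintro L hi hj
  simp only [T5, T6, Finset.mem_image, Finset.mem_product, Finset.mem_range] at hi hj
  obtain ⟨p, hp, rfl⟩ := hi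
  obtain ⟨q, hq, h⟩ := hj
  rcases fpair_eq h with ⟨e1, e2⟩ | ⟨e1, e2⟩ <;> rw [vec3_eq_iff] at e1 e2 <;> omega

lemma card_mem_pair {L} (h : L ∈ T1 m₁ m₂ m₃ ∪ T2 m₁ m₂ m₃ ∪ T3 m₁ m₂ m₃ ∪ T4 m₁ m₂ m₃ ∪
    T5 m₁ m₂ m₃ ∪ T6 m₁ m₂ m₃) : L.card = 2 := by
  simp only [Finset.mem_union] at h
  rcases h with ((((h | h) | h) | h) | h) | h <;>
    simp only [T1, T2, T3, T4, T5, T6, Finset.mem_image, Finset.mem_product,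
      Finset.mem_range] at h <;>
    obtain ⟨p, hp, rfl⟩ := h <;>
    refine Finset.card_pair (fun hh => ?_) <;> rw [vec3_eq_iff] at hh <;> omega

lemma card_mem_T7 {L} (h : L ∈ T7 m₁ m₂ m₃) : L.card = 3 := by
  simp only [T7, Finset.mem_image, Finset.mem_product, Finset.mem_range] at h
  obtain ⟨p, hp, rfl⟩ := h
  refine Finset.card_eq_three.mpr ⟨_, _, _, fun hh => ?_, fun hh => ?_, fun hh => ?_, rfl⟩ <;>
    rw [vec3_eq_iff] at hh <;> omega

lemma disj_card {A B : Finset (Finset (Fin 3 → ℕ))} {x y : ℕ} (hx : ∀ L ∈ A, L.card = x)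
    (hy : ∀ L ∈ B, L.card = y) (hxy : x ≠ y) : Disjoint A B := by
  rw [Finset.disjoint_left]
  intro L hA hB
  exact hxy ((hx L hA) ▸ (hy L hB) ▸ rfl)

lemma eq_vec3 {v : Fin 3 → ℕ} {a b c : ℕ} (h0 : v 0 = a) (h1 : v 1 = b) (h2 : v 2 = c) :
    ![a, b, c] = v := by
  subst h0; subst h1; subst h2; exact (vec3_ext v).symm

lemma mem_T1_of (x y : Fin 3 → ℕ) (hx0 : x 0 = m₁) (hx1 : x 1 < m₂) (hx2 : x 2 = m₃)
    (hy0 : y 0 < m₁) (hy1 : y 1 = m₂) (hy2 : y 2 = m₃) :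
    ({x, y} : Finset (Fin 3 → ℕ)) ∈ T1 m₁ m₂ m₃ := by
  simp only [T1, Finset.mem_image, Finset.mem_product, Finset.mem_range]
  exact ⟨(y 0, x 1), ⟨hy0, hx1⟩, by rw [eq_vec3 hx0 rfl hx2, eq_vec3 rfl hy1 hy2]⟩

lemma mem_T2_of (x y : Fin 3 → ℕ) (hx0 : x 0 = m₁) (hx1 : x 1 = m₂) (hx2 : x 2 < m₃)
    (hy0 : y 0 < m₁) (hy1 : y 1 = m₂) (hy2 : y 2 = m₃) :
    ({x, y} : Finset (Fin 3 → ℕ)) ∈ T2 m₁ m₂ m₃ := by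
  simp only [T2, Finset.mem_image, Finset.mem_product, Finset.mem_range]
  exact ⟨(y 0, x 2), ⟨hy0, hx2⟩, by rw [eq_vec3 hx0 hx1 rfl, eq_vec3 rfl hy1 hy2]⟩

lemma mem_T3_of (x y : Fin 3 → ℕ) (hx0 : x 0 = m₁) (hx1 : x 1 = m₂) (hx2 : x 2 < m₃)
    (hy0 : y 0 = m₁) (hy1 : y 1 < m₂) (hy2 : y 2 = m₃) :
    ({x, y} : Finset (Fin 3 → ℕ)) ∈ T3 m₁ m₂ m₃ := by
  simp only [T3, Finset.mem_image, Finset.mem_product, Finset.mem_range]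
  exact ⟨(y 1, x 2), ⟨hy1, hx2⟩, by rw [eq_vec3 hx0 hx1 rfl, eq_vec3 hy0 rfl hy2]⟩

lemma mem_T4_of (x y : Fin 3 → ℕ) (hx0 : x 0 = m₁) (hx1 : x 1 < m₂) (hx2 : x 2 < m₃)
    (hy0 : y 0 < m₁) (hy1 : y 1 = m₂) (hy2 : y 2 = m₃) :
    ({x, y} : Finset (Fin 3 → ℕ)) ∈ T4 m₁ m₂ m₃ := by
  simp only [T4, Finset.mem_image, Finset.mem_product, Finset.mem_range]
  exact ⟨(y 0, x 1, x 2), ⟨hy0, hx1, hx2⟩, by rw [eq_vec3 hx0 rfl rfl, eq_vec3 rfl hy1 hy2]⟩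

lemma mem_T5_of (x y : Fin 3 → ℕ) (hx0 : x 0 < m₁) (hx1 : x 1 = m₂) (hx2 : x 2 < m₃)
    (hy0 : y 0 = m₁) (hy1 : y 1 < m₂) (hy2 : y 2 = m₃) :
    ({x, y} : Finset (Fin 3 → ℕ)) ∈ T5 m₁ m₂ m₃ := by
  simp only [T5, Finset.mem_image, Finset.mem_product, Finset.mem_range]
  exact ⟨(x 0, y 1, x 2), ⟨hx0, hy1, hx2⟩, by rw [eq_vec3 rfl hx1 rfl, eq_vec3 hy0 rfl hy2]⟩

lemma mem_T6_of (x y : Fin 3 → ℕ) (hx0 : x 0 < m₁) (hx1 : x 1 < m₂) (hx2 : x 2 = m₃)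
    (hy0 : y 0 = m₁) (hy1 : y 1 = m₂) (hy2 : y 2 < m₃) :
    ({x, y} : Finset (Fin 3 → ℕ)) ∈ T6 m₁ m₂ m₃ := by
  simp only [T6, Finset.mem_image, Finset.mem_product, Finset.mem_range]
  exact ⟨(x 0, x 1, y 2), ⟨hx0, hx1, hy2⟩, by rw [eq_vec3 rfl rfl hx2, eq_vec3 hy0 hy1 rfl]⟩

lemma mem_T7_of (x y z : Fin 3 → ℕ) (hx0 : x 0 = m₁) (hy1 : y 1 = m₂) (hz2 : z 2 = m₃)
    (hy0 : y 0 < m₁) (hz0 : z 0 < m₁) (hx1 : x 1 < m₂) (hz1 : z 1 < m₂)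
    (hx2 : x 2 < m₃) (hy2 : y 2 < m₃) :
    ({x, y, z} : Finset (Fin 3 → ℕ)) ∈ T7 m₁ m₂ m₃ := by
  simp only [T7, Finset.mem_image, Finset.mem_product, Finset.mem_range]
  exact ⟨((y 0, x 1, x 2), (z 0, z 1, y 2)), ⟨⟨hy0, hx1, hx2⟩, ⟨hz0, hz1, hy2⟩⟩,
    by rw [eq_vec3 hx0 rfl rfl, eq_vec3 rfl hy1 rfl, eq_vec3 rfl rfl hz2]⟩

lemma fin3_tri : ∀ t : Fin 3, t = 0 ∨ t = 1 ∨ t = 2 := by decide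

set_option maxHeartbeats 2000000 in
lemma classify (h₁ : 1 ≤ m₁) (h₂ : 1 ≤ m₂) (h₃ : 1 ≤ m₃) :
    ∀ L, Good m₁ m₂ m₃ L → L ∈ T m₁ m₂ m₃ := by
  intro L hG
  obtain ⟨hanti, hdom, hsupE⟩ := hG
  have hsup : ∀ t : Fin 3, mLcm L t = ![m₁, m₂, m₃] t := fun t => congrFun hsupE t
  have hne : L.Nonempty := by
    rcases Finset.eq_empty_or_nonempty L with rfl | h
    · exfalso; have := hsup 0; simp [mLcm] at this; omega
    · exact h
  classical
  have hcard3 : L.card ≤ 3 := by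
    choose f hf using (fun v (hv : v ∈ L) => hdom v hv)
    have hinj : Set.InjOn (fun v => if h : v ∈ L then f v h else 0) ↑L := by
      intro a ha b hb hab
      by_contra hnab
      have ha' : a ∈ L := ha
      have hb' : b ∈ L := hb
      have hA := hf a ha' b hb' (fun h => hnab h.symm)
      have hB := hf b hb' a ha' hnab
      simp only [dif_pos ha', dif_pos hb'] at hab
      rw [hab] at hA
      omega
    have := Finset.card_le_card_of_injOn _ (fun a _ => Finset.mem_univ (α := Fin 3) _) hinj
    simpa using this
  have hc1 : 1 ≤ L.card := Finset.card_pos.mpr hne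
  have hcs : L.card = 1 ∨ L.card = 2 ∨ L.card = 3 := by omega
  rcases hcs with hc | hc | hc
  · obtain ⟨a, rfl⟩ := Finset.card_eq_one.mp hc
    have ha : a = ![m₁, m₂, m₃] := by
      funext t; have := hsup t; simpa [mLcm] using this
    subst ha
    have hmem : ({![m₁, m₂, m₃]} : Finset (Fin 3 → ℕ)) ∈ T0 m₁ m₂ m₃ := by simp [T0]
    simp only [T, Finset.mem_union]
    exact Or.inl (Or.inl (Or.inl (Or.inl (Or.inl (Or.inl (Or.inl hmem))))))
  · obtain ⟨u, v, huv, rfl⟩ := Finset.card_eq_two.mp hc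
    obtain ⟨i, hi⟩ := hdom u (by simp)
    obtain ⟨j, hj⟩ := hdom v (by simp)
    have hvi : v i < u i := hi v (by simp) huv.symm
    have huj : u j < v j := hj u (by simp) huv
    have hmax : ∀ t, max (u t) (v t) = ![m₁, m₂, m₃] t := fun t => by
      have := hsup t; rwa [mLcm_pair] at this
    have hm0 : max (u 0) (v 0) = m₁ := by simpa using hmax 0
    have hm1 : max (u 1) (v 1) = m₂ := by simpa using hmax 1
    have hm2 : max (u 2) (v 2) = m₃ := by simpa using hmax 2
    have hij : i ≠ j := by rintro rfl; omega
    simp only [T, Finset.mem_union]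
    rcases fin3_tri i with rfl | rfl | rfl <;> rcases fin3_tri j with rfl | rfl | rfl
    · exact absurd rfl hij
    · -- (i,j) = (0,1)
      rcases Nat.lt_trichotomy (u 2) (v 2) with hk | hk | hk
      · have HH4 := mem_T4_of m₁ m₂ m₃ u v (by omega) (by omega) (by omega) (by omega) (by omega)
          (by omega)
        exact Or.inl (Or.inl (Or.inl (Or.inr HH4)))
      · have HH1 := mem_T1_of m₁ m₂ m₃ u v (by omega) (by omega) (by omega) (by omega) (by omega)
          (by omega)
        exact Or.inl (Or.inl (Or.inl (Or.inl (Or.inl (Or.inl (Or.inr HH1))))))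
      · have HH5 := mem_T5_of m₁ m₂ m₃ v u (by omega) (by omega) (by omega) (by omega) (by omega)
          (by omega)
        rw [Finset.pair_comm v u] at HH5
        exact Or.inl (Or.inl (Or.inr HH5))
    · -- (0,2)
      rcases Nat.lt_trichotomy (u 1) (v 1) with hk | hk | hk
      · have HH4 := mem_T4_of m₁ m₂ m₃ u v (by omega) (by omega) (by omega) (by omega) (by omega)
          (by omega)
        exact Or.inl (Or.inl (Or.inl (Or.inr HH4)))
      · have HH2 := mem_T2_of m₁ m₂ m₃ u v (by omega) (by omega) (by omega) (by omega) (by omega)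
          (by omega)
        exact Or.inl (Or.inl (Or.inl (Or.inl (Or.inl (Or.inr HH2)))))
      · have HH6 := mem_T6_of m₁ m₂ m₃ v u (by omega) (by omega) (by omega) (by omega) (by omega)
          (by omega)
        rw [Finset.pair_comm v u] at HH6
        exact Or.inl (Or.inr HH6)
    · -- (1,0)
      rcases Nat.lt_trichotomy (u 2) (v 2) with hk | hk | hk
      · have HH5 := mem_T5_of m₁ m₂ m₃ u v (by omega) (by omega) (by omega) (by omega) (by omega)
          (by omega)
        exact Or.inl (Or.inl (Or.inr HH5))
      · have HH1 := mem_T1_of m₁ m₂ m₃ v u (by omega) (by omega) (by omega) (by omega) (by omega)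
          (by omega)
        rw [Finset.pair_comm v u] at HH1
        exact Or.inl (Or.inl (Or.inl (Or.inl (Or.inl (Or.inl (Or.inr HH1))))))
      · have HH4 := mem_T4_of m₁ m₂ m₃ v u (by omega) (by omega) (by omega) (by omega) (by omega)
          (by omega)
        rw [Finset.pair_comm v u] at HH4
        exact Or.inl (Or.inl (Or.inl (Or.inr HH4)))
    · exact absurd rfl hij
    · -- (1,2)
      rcases Nat.lt_trichotomy (u 0) (v 0) with hk | hk | hk
      · have HH5 := mem_T5_of m₁ m₂ m₃ u v (by omega) (by omega) (by omega) (by omega) (by omega)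
          (by omega)
        exact Or.inl (Or.inl (Or.inr HH5))
      · have HH3 := mem_T3_of m₁ m₂ m₃ u v (by omega) (by omega) (by omega) (by omega) (by omega)
          (by omega)
        exact Or.inl (Or.inl (Or.inl (Or.inl (Or.inr HH3))))
      · have HH6 := mem_T6_of m₁ m₂ m₃ v u (by omega) (by omega) (by omega) (by omega) (by omega)
          (by omega)
        rw [Finset.pair_comm v u] at HH6
        exact Or.inl (Or.inr HH6)
    · -- (2,0)
      rcases Nat.lt_trichotomy (u 1) (v 1) with hk | hk | hk
      · have HH6 := mem_T6_of m₁ m₂ m₃ u v (by omega) (by omega) (by omega) (by omega) (by omega)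
          (by omega)
        exact Or.inl (Or.inr HH6)
      · have HH2 := mem_T2_of m₁ m₂ m₃ v u (by omega) (by omega) (by omega) (by omega) (by omega)
          (by omega)
        rw [Finset.pair_comm v u] at HH2
        exact Or.inl (Or.inl (Or.inl (Or.inl (Or.inl (Or.inr HH2)))))
      · have HH4 := mem_T4_of m₁ m₂ m₃ v u (by omega) (by omega) (by omega) (by omega) (by omega)
          (by omega)
        rw [Finset.pair_comm v u] at HH4
        exact Or.inl (Or.inl (Or.inl (Or.inr HH4)))
    · -- (2,1)
      rcases Nat.lt_trichotomy (u 0) (v 0) with hk | hk | hk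
      · have HH6 := mem_T6_of m₁ m₂ m₃ u v (by omega) (by omega) (by omega) (by omega) (by omega)
          (by omega)
        exact Or.inl (Or.inr HH6)
      · have HH3 := mem_T3_of m₁ m₂ m₃ v u (by omega) (by omega) (by omega) (by omega) (by omega)
          (by omega)
        rw [Finset.pair_comm v u] at HH3
        exact Or.inl (Or.inl (Or.inl (Or.inl (Or.inr HH3))))
      · have HH5 := mem_T5_of m₁ m₂ m₃ v u (by omega) (by omega) (by omega) (by omega) (by omega)
          (by omega)
        rw [Finset.pair_comm v u] at HH5
        exact Or.inl (Or.inl (Or.inr HH5))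
    · exact absurd rfl hij
  · obtain ⟨x, y, z, hxy, hxz, hyz, rfl⟩ := Finset.card_eq_three.mp hc
    obtain ⟨i, hi⟩ := hdom x (by simp)
    obtain ⟨j, hj⟩ := hdom y (by simp)
    obtain ⟨k, hk⟩ := hdom z (by simp)
    have hyx : y i < x i := hi y (by simp) hxy.symm
    have hzx : z i < x i := hi z (by simp) hxz.symm
    have hxy' : x j < y j := hj x (by simp) hxy
    have hzy : z j < y j := hj z (by simp) hyz.symm
    have hxz' : x k < z k := hk x (by simp) hxz
    have hyz' : y k < z k := hk y (by simp) hyz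
    have hij : i ≠ j := by rintro rfl; omega
    have hik : i ≠ k := by rintro rfl; omega
    have hjk : j ≠ k := by rintro rfl; omega
    have hmax : ∀ t, max (x t) (max (y t) (z t)) = ![m₁, m₂, m₃] t := fun t => by
      have := hsup t; rwa [mLcm_triple] at this
    have hm0 : max (x 0) (max (y 0) (z 0)) = m₁ := by simpa using hmax 0
    have hm1 : max (x 1) (max (y 1) (z 1)) = m₂ := by simpa using hmax 1
    have hm2 : max (x 2) (max (y 2) (z 2)) = m₃ := by simpa using hmax 2
    simp only [T, Finset.mem_union]
    rcases fin3_tri i with rfl | rfl | rfl <;> rcases fin3_tri j with rfl | rfl | rfl <;>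
      rcases fin3_tri k with rfl | rfl | rfl <;>
      first
        | exact absurd rfl hij
        | exact absurd rfl hik
        | exact absurd rfl hjk
        | (have H7 := mem_T7_of m₁ m₂ m₃ x y z (by omega) (by omega) (by omega) (by omega) (by omega) (by omega) (by omega) (by omega) (by omega);
           exact Or.inr H7)
        | (have H7 := mem_T7_of m₁ m₂ m₃ x z y (by omega) (by omega) (by omega) (by omega) (by omega) (by omega) (by omega) (by omega) (by omega);
           rw [Finset.pair_comm z y] at H7;
           exact Or.inr H7)
        | (have H7 := mem_T7_of m₁ m₂ m₃ y x z (by omega) (by omega) (by omega) (by omega) (by omega) (by omega) (by omega) (by omega) (by omega);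
           rw [Finset.insert_comm y x] at H7;
           exact Or.inr H7)
        | (have H7 := mem_T7_of m₁ m₂ m₃ y z x (by omega) (by omega) (by omega) (by omega) (by omega) (by omega) (by omega) (by omega) (by omega);
           rw [Finset.pair_comm z x, Finset.insert_comm y x] at H7;
           exact Or.inr H7)
        | (have H7 := mem_T7_of m₁ m₂ m₃ z x y (by omega) (by omega) (by omega) (by omega) (by omega) (by omega) (by omega) (by omega) (by omega);
           rw [Finset.insert_comm z x, Finset.pair_comm z y] at H7;
           exact Or.inr H7)
        | (have H7 := mem_T7_of m₁ m₂ m₃ z y x (by omega) (by omega) (by omega) (by omega) (by omega) (by omega) (by omega) (by omega) (by omega);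
           rw [Finset.insert_comm z y, Finset.pair_comm z x, Finset.insert_comm y x] at H7;
           exact Or.inr H7)

lemma card_T :
    (T m₁ m₂ m₃).card =
      1 + m₁ ^ 2 * m₂ ^ 2 * m₃ ^ 2 + m₁ * m₂ + m₁ * m₃ + m₂ * m₃ + 3 * (m₁ * m₂ * m₃) := by
  have e0 : ∀ L ∈ T0 m₁ m₂ m₃, L.card = 1 := fun L h => card_mem_T0 m₁ m₂ m₃ h
  have e7 : ∀ L ∈ T7 m₁ m₂ m₃, L.card = 3 := fun L h => card_mem_T7 m₁ m₂ m₃ h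
  have e1 : ∀ L ∈ T1 m₁ m₂ m₃, L.card = 2 :=
    fun L h => card_mem_pair m₁ m₂ m₃ (by simp only [Finset.mem_union]; tauto)
  have e2 : ∀ L ∈ T2 m₁ m₂ m₃, L.card = 2 :=
    fun L h => card_mem_pair m₁ m₂ m₃ (by simp only [Finset.mem_union]; tauto)
  have e3 : ∀ L ∈ T3 m₁ m₂ m₃, L.card = 2 :=
    fun L h => card_mem_pair m₁ m₂ m₃ (by simp only [Finset.mem_union]; tauto)
  have e4 : ∀ L ∈ T4 m₁ m₂ m₃, L.card = 2 :=
    fun L h => card_mem_pair m₁ m₂ m₃ (by simp only [Finset.mem_union]; tauto)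
  have e5 : ∀ L ∈ T5 m₁ m₂ m₃, L.card = 2 :=
    fun L h => card_mem_pair m₁ m₂ m₃ (by simp only [Finset.mem_union]; tauto)
  have e6 : ∀ L ∈ T6 m₁ m₂ m₃, L.card = 2 :=
    fun L h => card_mem_pair m₁ m₂ m₃ (by simp only [Finset.mem_union]; tauto)
  have D1 : Disjoint (T0 m₁ m₂ m₃) (T1 m₁ m₂ m₃) := disj_card e0 e1 (by omega)
  have D2 : Disjoint (T0 m₁ m₂ m₃ ∪ T1 m₁ m₂ m₃) (T2 m₁ m₂ m₃) := by
    simp only [Finset.disjoint_union_left]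
    exact ⟨disj_card e0 e2 (by omega), disj_T1_T2 m₁ m₂ m₃⟩
  have D3 : Disjoint (T0 m₁ m₂ m₃ ∪ T1 m₁ m₂ m₃ ∪ T2 m₁ m₂ m₃) (T3 m₁ m₂ m₃) := by
    simp only [Finset.disjoint_union_left]
    exact ⟨⟨disj_card e0 e3 (by omega), disj_T1_T3 m₁ m₂ m₃⟩, disj_T2_T3 m₁ m₂ m₃⟩
  have D4 : Disjoint (T0 m₁ m₂ m₃ ∪ T1 m₁ m₂ m₃ ∪ T2 m₁ m₂ m₃ ∪ T3 m₁ m₂ m₃)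
      (T4 m₁ m₂ m₃) := by
    simp only [Finset.disjoint_union_left]
    exact ⟨⟨⟨disj_card e0 e4 (by omega), disj_T1_T4 m₁ m₂ m₃⟩, disj_T2_T4 m₁ m₂ m₃⟩,
      disj_T3_T4 m₁ m₂ m₃⟩
  have D5 : Disjoint (T0 m₁ m₂ m₃ ∪ T1 m₁ m₂ m₃ ∪ T2 m₁ m₂ m₃ ∪ T3 m₁ m₂ m₃ ∪ T4 m₁ m₂ m₃)
      (T5 m₁ m₂ m₃) := by
    simp only [Finset.disjoint_union_left]
    exact ⟨⟨⟨⟨disj_card e0 e5 (by omega), disj_T1_T5 m₁ m₂ m₃⟩, disj_T2_T5 m₁ m₂ m₃⟩,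
      disj_T3_T5 m₁ m₂ m₃⟩, disj_T4_T5 m₁ m₂ m₃⟩
  have D6 : Disjoint (T0 m₁ m₂ m₃ ∪ T1 m₁ m₂ m₃ ∪ T2 m₁ m₂ m₃ ∪ T3 m₁ m₂ m₃ ∪ T4 m₁ m₂ m₃ ∪
      T5 m₁ m₂ m₃) (T6 m₁ m₂ m₃) := by
    simp only [Finset.disjoint_union_left]
    exact ⟨⟨⟨⟨⟨disj_card e0 e6 (by omega), disj_T1_T6 m₁ m₂ m₃⟩, disj_T2_T6 m₁ m₂ m₃⟩,
      disj_T3_T6 m₁ m₂ m₃⟩, disj_T4_T6 m₁ m₂ m₃⟩, disj_T5_T6 m₁ m₂ m₃⟩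
  have D7 : Disjoint (T0 m₁ m₂ m₃ ∪ T1 m₁ m₂ m₃ ∪ T2 m₁ m₂ m₃ ∪ T3 m₁ m₂ m₃ ∪ T4 m₁ m₂ m₃ ∪
      T5 m₁ m₂ m₃ ∪ T6 m₁ m₂ m₃) (T7 m₁ m₂ m₃) := by
    simp only [Finset.disjoint_union_left]
    exact ⟨⟨⟨⟨⟨⟨disj_card e0 e7 (by omega), disj_card e1 e7 (by omega)⟩,
      disj_card e2 e7 (by omega)⟩, disj_card e3 e7 (by omega)⟩, disj_card e4 e7 (by omega)⟩,
      disj_card e5 e7 (by omega)⟩, disj_card e6 e7 (by omega)⟩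
  rw [T, Finset.card_union_of_disjoint D7, Finset.card_union_of_disjoint D6,
    Finset.card_union_of_disjoint D5, Finset.card_union_of_disjoint D4,
    Finset.card_union_of_disjoint D3, Finset.card_union_of_disjoint D2,
    Finset.card_union_of_disjoint D1, card_T0, card_T1, card_T2, card_T3, card_T4, card_T5,
    card_T6, card_T7]
  ring

end Pieces
end CountDom

theorem count_dominant_three_vars (m₁ m₂ m₃ : ℕ) (h₁ : 1 ≤ m₁) (h₂ : 1 ≤ m₂) (h₃ : 1 ≤ m₃) :
    Set.ncard {L : Finset (Fin 3 → ℕ) |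
      (∀ u ∈ L, ∀ v ∈ L, u ≤ v → u = v) ∧ DominantSet L ∧ mLcm L = ![m₁, m₂, m₃]} =
      1 + m₁ ^ 2 * m₂ ^ 2 * m₃ ^ 2 + m₁ * m₂ + m₁ * m₃ + m₂ * m₃ + 3 * (m₁ * m₂ * m₃) := by
  have hset : {L : Finset (Fin 3 → ℕ) |
      (∀ u ∈ L, ∀ v ∈ L, u ≤ v → u = v) ∧ DominantSet L ∧ mLcm L = ![m₁, m₂, m₃]} =
      ↑(CountDom.T m₁ m₂ m₃) := by
    ext L
    constructor
    · intro h; exact CountDom.classify m₁ m₂ m₃ h₁ h₂ h₃ L h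
    · intro h; exact CountDom.good_T m₁ m₂ m₃ L h
  rw [hset, Set.ncard_coe_finset, CountDom.card_T]
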